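/- There exists a constant c > 0 (depending only on λ = sup_k m_k) such that for every integer n ≥ 1, ∑_{l=1}^{M_n − 1} v(l) ≥ c · n · M_n. -/

import Mathlib

open Finset
open scoped ENNReal NNReal

noncomputable section

namespace Vilenkin

/-- The generalized powers `M_0 = 1`, `M_{k+1} = m_k M_k`. -/
def M (m : ℕ → ℕ) : ℕ → ℕ
  | 0 => 1
  | k + 1 => m k * M m k

/-- The `j`-th digit of `n` in the mixed-radix system determined by `m`. -/
def digit (m : ℕ → ℕ) (n j : ℕ) : ℕ := (n / M m j) % m j

/-- The Vilenkin group `G_m`, the complete direct product of the cyclic groups `Z_{m_k}`. -/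
abbrev G (m : ℕ → ℕ) : Type := ∀ k : ℕ, ZMod (m k)

instance (n : ℕ) : MeasurableSpace (ZMod n) := ⊤

/-- The generalized Rademacher functions `r_k(x) = exp(2 π i x_k / m_k)`. -/
def rad (m : ℕ → ℕ) (k : ℕ) (x : G m) : ℂ :=
  Complex.exp (2 * Real.pi * Complex.I * ((x k).val : ℂ) / (m k : ℂ))

/-- The Vilenkin system `ψ_n = ∏_k r_k^{n_k}` (the product is finite). -/
def psi (m : ℕ → ℕ) (n : ℕ) (x : G m) : ℂ :=
  ∏ j ∈ Finset.range (n + 1), rad m j x ^ digit m n j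

/-- The Dirichlet kernels `D_n = ∑_{k=0}^{n-1} ψ_k`. -/
def D (m : ℕ → ℕ) (n : ℕ) (x : G m) : ℂ :=
  ∑ k ∈ Finset.range n, psi m k x

/-- The Fejér kernels `K_n = (1/n) ∑_{k=0}^{n-1} D_k`. -/
def K (m : ℕ → ℕ) (n : ℕ) (x : G m) : ℂ :=
  (n : ℂ)⁻¹ * ∑ k ∈ Finset.range n, D m k x

/-- The cylinder `I_n(x) = {y : y_j = x_j for j < n}`. -/
def cyl (m : ℕ → ℕ) (n : ℕ) (x : G m) : Set (G m) := {y | ∀ j < n, y j = x j}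

/-- The element `e_n` with `n`-th coordinate `1` and all other coordinates `0`. -/
def e (m : ℕ → ℕ) (n : ℕ) : G m := fun k => if k = n then 1 else 0


/-- `δ_j(n) = 1` if the `j`-th digit of `n` is nonzero, `0` otherwise. -/
def delta (m : ℕ → ℕ) (n j : ℕ) : ℕ := if digit m n j ≠ 0 then 1 else 0

/-- The variation `v(n) = δ_0 + ∑_j |δ_{j+1} - δ_j|` (a finite sum). -/
def vvar (m : ℕ → ℕ) (n : ℕ) : ℕ :=
  delta m n 0 + ∑ j ∈ Finset.range n, ((delta m n (j + 1) : ℤ) - (delta m n j : ℤ)).natAbs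


section Aux

variable {m : ℕ → ℕ}

lemma M_pos (h1 : ∀ k, 1 ≤ m k) (k : ℕ) : 0 < M m k := by
  induction k with
  | zero => simp [M]
  | succ k ih => exact Nat.mul_pos (h1 k) ih

lemma M_dvd {j k : ℕ} (hjk : j ≤ k) : M m j ∣ M m k := by
  induction k with
  | zero => simp_all
  | succ k ih =>
    rcases Nat.lt_or_ge j (k+1) with h | h
    · exact (ih (by omega)).trans (Dvd.intro_left (m k) rfl)
    · have : j = k + 1 := by omega
      subst this; rfl

lemma M_le (h1 : ∀ k, 1 ≤ m k) {j k : ℕ} (hjk : j ≤ k) : M m j ≤ M m k :=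
  Nat.le_of_dvd (M_pos h1 k) (M_dvd hjk)

lemma lt_M (h2 : ∀ k, 2 ≤ m k) (k : ℕ) : k < M m k := by
  induction k with
  | zero => simp [M]
  | succ k ih =>
    have h := h2 k
    calc k + 1 < 2 * M m k := by omega
    _ ≤ m k * M m k := Nat.mul_le_mul_right _ h
    _ = M m (k+1) := rfl

lemma digit_eq_zero_of_lt {l j : ℕ} (hl : l < M m j) : digit m l j = 0 := by
  simp [digit, Nat.div_eq_of_lt hl]

lemma delta_eq_zero_of_lt {l j : ℕ} (hl : l < M m j) : delta m l j = 0 := by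
  simp [delta, digit_eq_zero_of_lt hl]

lemma vvar_eq (h2 : ∀ k, 2 ≤ m k) {l N : ℕ} (hlN : l < M m N) :
    vvar m l = delta m l 0 +
      ∑ j ∈ range N, ((delta m l (j + 1) : ℤ) - (delta m l j : ℤ)).natAbs := by
  have h1 : ∀ k, 1 ≤ m k := fun k => le_trans one_le_two (h2 k)
  have hext : ∀ a b : ℕ, a ≤ b → (∀ j, a ≤ j → delta m l j = 0) →
      ∑ j ∈ range a, ((delta m l (j + 1) : ℤ) - (delta m l j : ℤ)).natAbs
        = ∑ j ∈ range b, ((delta m l (j + 1) : ℤ) - (delta m l j : ℤ)).natAbs := by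
    intro a b hab hz
    apply Finset.sum_subset (Finset.range_subset_range.2 hab)
    intro j hj hja
    have haj : a ≤ j := by simpa using hja
    rw [hz j haj, hz (j+1) (by omega)]
    simp
  have hzl : ∀ j, l ≤ j → delta m l j = 0 := fun j hj =>
    delta_eq_zero_of_lt (lt_of_le_of_lt hj (lt_M h2 j))
  have hzN : ∀ j, N ≤ j → delta m l j = 0 := fun j hj =>
    delta_eq_zero_of_lt (lt_of_lt_of_le hlN (M_le h1 hj))
  unfold vvar
  congr 1
  rw [hext l (max l N) (le_max_left _ _) hzl, hext N (max l N) (le_max_right _ _) hzN]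

lemma digit_add (h1 : ∀ k, 1 ≤ m k) {j a : ℕ} (ha : M m (j+1) ∣ a) (r : ℕ) :
    digit m (a + r) j = digit m r j := by
  obtain ⟨t, ht⟩ := ha
  have hM : 0 < M m j := M_pos h1 j
  have h : a + r = r + (t * m j) * M m j := by
    rw [ht]; show m j * M m j * t + r = _; ring
  rw [digit, digit, h, Nat.add_mul_div_right _ _ hM, Nat.add_mul_mod_self_right]

lemma digit_mul_add (h1 : ∀ k, 1 ≤ m k) {n d r : ℕ} (hd : d < m n) (hr : r < M m n) :
    digit m (d * M m n + r) n = d := by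
  rw [digit, add_comm, Nat.add_mul_div_right _ _ (M_pos h1 n), Nat.div_eq_of_lt hr, zero_add,
    Nat.mod_eq_of_lt hd]

lemma key (h2 : ∀ k, 2 ≤ m k) {n d r : ℕ} (hd1 : 1 ≤ d) (hd : d < m (n+1))
    (hr : r < M m (n+1)) :
    vvar m r + 2 * (1 - delta m r n) ≤ vvar m (d * M m (n+1) + r) := by
  have h1 : ∀ k, 1 ≤ m k := fun k => le_trans one_le_two (h2 k)
  set l := d * M m (n+1) + r with hl
  have hM2 : M m (n+2) = m (n+1) * M m (n+1) := rfl
  have hlM : l < M m (n+2) := by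
    have h' : l < (d+1) * M m (n+1) := by
      rw [add_mul, one_mul]; omega
    calc l < (d+1) * M m (n+1) := h'
      _ ≤ m (n+1) * M m (n+1) := Nat.mul_le_mul_right _ (by omega)
      _ = M m (n+2) := rfl
  have hrM : r < M m (n+2) := lt_of_lt_of_le hr (M_le h1 (by omega))
  have hdig : ∀ j < n+1, digit m l j = digit m r j := by
    intro j hj
    exact digit_add h1 (Dvd.dvd.mul_left (M_dvd hj) d) r
  have hdelta : ∀ j < n+1, delta m l j = delta m r j := by
    intro j hj; simp [delta, hdig j hj]
  have hln1 : delta m l (n+1) = 1 := by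
    have hds := digit_mul_add h1 hd hr
    rw [← hl] at hds
    simp only [delta, hds]
    simp
    omega
  have hln2 : delta m l (n+2) = 0 := delta_eq_zero_of_lt hlM
  have hrn1 : delta m r (n+1) = 0 := delta_eq_zero_of_lt hr
  have hrn2 : delta m r (n+2) = 0 := delta_eq_zero_of_lt hrM
  rw [vvar_eq h2 hrM, vvar_eq h2 hlM]
  rw [Finset.sum_range_succ, Finset.sum_range_succ,
      Finset.sum_range_succ (n := n+1), Finset.sum_range_succ (n := n)]
  have hsum : ∑ j ∈ range n, ((delta m l (j + 1) : ℤ) - (delta m l j : ℤ)).natAbs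
      = ∑ j ∈ range n, ((delta m r (j + 1) : ℤ) - (delta m r j : ℤ)).natAbs := by
    refine Finset.sum_congr rfl fun j hj => ?_
    have hj' : j < n := Finset.mem_range.mp hj
    rw [hdelta j (by omega), hdelta (j+1) (by omega)]
  rw [hsum, hdelta 0 (by omega), hdelta n (by omega), hln1, hln2, hrn1, hrn2]
  have hd0 : delta m r n = 0 ∨ delta m r n = 1 := by unfold delta; split <;> simp
  rcases hd0 with h | h <;> rw [h] <;> simp <;> omega

lemma sum_range_mul (f : ℕ → ℕ) (a b : ℕ) :
    ∑ l ∈ range (a * b), f l = ∑ d ∈ range a, ∑ r ∈ range b, f (d * b + r) := by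
  induction a with
  | zero => simp
  | succ a ih =>
    have h1 : (a+1)*b = a*b + b := by ring
    rw [h1, Finset.sum_range_add, ih, Finset.sum_range_succ]

lemma Tstep (h2 : ∀ k, 2 ≤ m k) (t : ℕ) :
    m (t+1) * (∑ l ∈ range (M m (t+1)), vvar m l) + 2 * M m t
      ≤ ∑ l ∈ range (M m (t+2)), vvar m l := by
  have h1 : ∀ k, 1 ≤ m k := fun k => le_trans one_le_two (h2 k)
  have hM2 : M m (t+2) = m (t+1) * M m (t+1) := rfl
  rw [hM2, sum_range_mul]
  set T := ∑ l ∈ range (M m (t+1)), vvar m l with hT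
  have inner : ∀ d, 1 ≤ d → d < m (t+1) →
      T + 2 * M m t ≤ ∑ r ∈ range (M m (t+1)), vvar m (d * M m (t+1) + r) := by
    intro d hd1 hd
    have hMle : M m t ≤ M m (t+1) := M_le h1 (by omega)
    have hsplit : ∀ f : ℕ → ℕ, ∑ r ∈ range (M m (t+1)), f r
        = ∑ r ∈ range (M m t), f r + ∑ r ∈ Ico (M m t) (M m (t+1)), f r := by
      intro f
      rw [range_eq_Ico, range_eq_Ico, Finset.sum_Ico_consecutive f (Nat.zero_le _) hMle]
    rw [hT, hsplit, hsplit (fun r => vvar m (d * M m (t+1) + r))]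
    have hA : ∑ r ∈ range (M m t), vvar m r + 2 * M m t
        ≤ ∑ r ∈ range (M m t), vvar m (d * M m (t+1) + r) := by
      have hterm : ∀ r ∈ range (M m t), vvar m r + 2 ≤ vvar m (d * M m (t+1) + r) := by
        intro r hr
        have hr' : r < M m t := Finset.mem_range.mp hr
        have hrr : r < M m (t+1) := lt_of_lt_of_le hr' hMle
        have hk := key h2 hd1 hd hrr
        rw [delta_eq_zero_of_lt hr'] at hk
        simpa using hk
      calc ∑ r ∈ range (M m t), vvar m r + 2 * M m t
          = ∑ r ∈ range (M m t), (vvar m r + 2) := by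
            rw [Finset.sum_add_distrib, Finset.sum_const, card_range, smul_eq_mul, mul_comm]
        _ ≤ _ := Finset.sum_le_sum hterm
    have hB : ∑ r ∈ Ico (M m t) (M m (t+1)), vvar m r
        ≤ ∑ r ∈ Ico (M m t) (M m (t+1)), vvar m (d * M m (t+1) + r) := by
      refine Finset.sum_le_sum fun r hr => ?_
      have hr' : r < M m (t+1) := (Finset.mem_Ico.mp hr).2
      have hk := key h2 hd1 hd hr'
      omega
    omega
  obtain ⟨k, hk⟩ : ∃ k, m (t+1) = k + 1 := ⟨m (t+1) - 1, by have := h2 (t+1); omega⟩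
  have hk1 : 1 ≤ k := by have := h2 (t+1); omega
  rw [hk, Finset.sum_range_succ']
  have hF0 : ∑ r ∈ range (M m (t+1)), vvar m (0 * M m (t+1) + r) = T := by simp [hT]
  rw [hF0]
  have hEach : ∑ i ∈ range k, (T + 2 * M m t)
      ≤ ∑ i ∈ range k, ∑ r ∈ range (M m (t+1)), vvar m ((i+1) * M m (t+1) + r) := by
    refine Finset.sum_le_sum fun i hi => ?_
    exact inner (i+1) (by omega) (by have := Finset.mem_range.mp hi; omega)
  rw [Finset.sum_const, card_range, smul_eq_mul] at hEach
  have hexp : k * (T + 2 * M m t) = k * T + k * (2 * M m t) := by ring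
  have hkM : 2 * M m t ≤ k * (2 * M m t) := Nat.le_mul_of_pos_left _ (by omega)
  have hmulT : (k + 1) * T = k * T + T := by ring
  omega

lemma main_bound {lam : ℕ} (h2 : ∀ k, 2 ≤ m k) (hlam : ∀ k, m k ≤ lam) :
    ∀ n, 1 ≤ n → n * M m n ≤ lam ^ 2 * ∑ l ∈ range (M m n), vvar m l := by
  have h1 : ∀ k, 1 ≤ m k := fun k => le_trans one_le_two (h2 k)
  intro n hn
  induction n, hn using Nat.le_induction with
  | base =>
    have hM1 : M m 1 = m 0 := by show m 0 * M m 0 = m 0; show m 0 * 1 = m 0; ring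
    have hv1 : 1 ≤ vvar m 1 := by
      have hd : digit m 1 0 = 1 := by
        show (1 / M m 0) % m 0 = 1
        show (1 / 1) % m 0 = 1
        rw [Nat.div_one, Nat.mod_eq_of_lt (by have := h2 0; omega)]
      have : delta m 1 0 = 1 := by simp [delta, hd]
      unfold vvar
      omega
    have hT : 1 ≤ ∑ l ∈ range (M m 1), vvar m l := by
      have hmem : 1 ∈ range (M m 1) := by
        rw [hM1]; exact Finset.mem_range.mpr (by have := h2 0; omega)
      calc 1 ≤ vvar m 1 := hv1
        _ ≤ ∑ l ∈ range (M m 1), vvar m l :=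
            Finset.single_le_sum (fun i _ => Nat.zero_le _) hmem
    calc 1 * M m 1 = m 0 := by rw [one_mul, hM1]
      _ ≤ lam := hlam 0
      _ ≤ lam ^ 2 := Nat.le_self_pow (by omega) lam
      _ ≤ lam ^ 2 * ∑ l ∈ range (M m 1), vvar m l := Nat.le_mul_of_pos_right _ (by omega)
  | succ n hn ih =>
    obtain ⟨t, rfl⟩ : ∃ t, n = t + 1 := ⟨n - 1, by omega⟩
    have hstep := Tstep h2 t
    set Tc := ∑ l ∈ range (M m (t+1)), vvar m l with hTc
    set Tn := ∑ l ∈ range (M m (t+2)), vvar m l with hTn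
    have hMM : M m (t+2) = m (t+1) * M m (t+1) := rfl
    have hM1 : M m (t+1) = m t * M m t := rfl
    have hmm : m (t+1) * m t ≤ lam ^ 2 := by
      calc m (t+1) * m t ≤ lam * lam := Nat.mul_le_mul (hlam (t+1)) (hlam t)
        _ = lam ^ 2 := by ring
    calc (t + 1 + 1) * M m (t+2)
        = m (t+1) * ((t+1) * M m (t+1)) + (m (t+1) * m t) * M m t := by
          rw [hMM, hM1]; ring
      _ ≤ m (t+1) * (lam ^ 2 * Tc) + lam ^ 2 * M m t := by
          exact Nat.add_le_add (Nat.mul_le_mul_left _ ih) (Nat.mul_le_mul_right _ hmm)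
      _ ≤ lam ^ 2 * (m (t+1) * Tc + 2 * M m t) := by
          have : m (t+1) * (lam ^ 2 * Tc) = lam ^ 2 * (m (t+1) * Tc) := by ring
          rw [this, Nat.mul_add]
          exact Nat.add_le_add_left (Nat.mul_le_mul_left _ (by omega)) _
      _ ≤ lam ^ 2 * Tn := Nat.mul_le_mul_left _ hstep

end Aux

/-- `∑_{l=1}^{M_n - 1} v(l) ≥ c n M_n`, with `c` depending only on `λ`. -/
theorem statement14 (lam : ℕ) :
    ∃ c : ℝ, 0 < c ∧ ∀ m : ℕ → ℕ, (∀ k, 2 ≤ m k) → (∀ k, m k ≤ lam) →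
      ∀ n : ℕ, 1 ≤ n →
        c * n * M m n ≤ ∑ l ∈ Finset.Icc 1 (M m n - 1), (vvar m l : ℝ) := by
  refine ⟨1 / ((lam : ℝ) + 1) ^ 2, by positivity, ?_⟩
  intro m h2 hlam n hn
  have h1 : ∀ k, 1 ≤ m k := fun k => le_trans one_le_two (h2 k)
  have hMpos : 0 < M m n := M_pos h1 n
  have hmain := main_bound h2 hlam n hn
  have hv0 : vvar m 0 = 0 := by simp [vvar, delta, digit]
  have E : ∑ l ∈ Finset.Icc 1 (M m n - 1), vvar m l = ∑ l ∈ range (M m n), vvar m l := by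
    apply Finset.sum_subset
    · intro x hx
      rw [Finset.mem_Icc] at hx
      exact Finset.mem_range.mpr (by omega)
    · intro x hx hnx
      rw [Finset.mem_range] at hx
      rw [Finset.mem_Icc] at hnx
      have : x = 0 := by omega
      rw [this, hv0]
  have Ecast : ∑ l ∈ Finset.Icc 1 (M m n - 1), (vvar m l : ℝ)
      = ((∑ l ∈ range (M m n), vvar m l : ℕ) : ℝ) := by
    rw [← E]; push_cast; ring
  rw [Ecast]
  set T : ℕ := ∑ l ∈ range (M m n), vvar m l with hT
  have hreal : (n : ℝ) * M m n ≤ (lam : ℝ) ^ 2 * T := by exact_mod_cast hmain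
  have hTnn : (0 : ℝ) ≤ T := Nat.cast_nonneg _
  have hsq : (lam : ℝ) ^ 2 * T ≤ ((lam : ℝ) + 1) ^ 2 * T := by
    apply mul_le_mul_of_nonneg_right _ hTnn
    nlinarith [Nat.cast_nonneg (α := ℝ) lam]
  rw [div_mul_eq_mul_div, div_mul_eq_mul_div, div_le_iff₀ (by positivity)]
  nlinarith


end Vilenkin

end
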